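/- Suppose G has at least one X–Y separator, and let r be the minimum size of an X–Y separator of G. Then there is exactly one important X–Y separator of G of size r. -/

import Mathlib

variable {V : Type*}

/-- `K` is an `X`–`Y` separator of `G`: `K` avoids `X ∪ Y` and every walk
from a vertex of `X` to a vertex of `Y` meets `K` (i.e. there is no
`X`–`Y` path in `G \ K`). -/
def IsSeparator (G : SimpleGraph V) (X Y K : Set V) : Prop :=
  K ⊆ (X ∪ Y)ᶜ ∧
  ∀ x ∈ X, ∀ y ∈ Y, ∀ w : G.Walk x y, ∃ v ∈ w.support, v ∈ K

/-- `NR G A B`: the vertices of `G \ B` that are not reachable from `A` in `G \ B`. -/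
def NR (G : SimpleGraph V) (A B : Set V) : Set V :=
  {v | v ∉ B ∧ ¬ ∃ a ∈ A, ∃ w : G.Walk a v, ∀ x ∈ w.support, x ∉ B}

/-- `Reach G A B`: the vertices reachable from `A` in `G \ B`. -/
def Reach (G : SimpleGraph V) (A B : Set V) : Set V :=
  {v | ∃ a ∈ A, ∃ w : G.Walk a v, ∀ x ∈ w.support, x ∉ B}

/-- The order on `X`–`Y` separators: `K1 ≤ K2` iff `NR(G,Y,K1) ⊆ NR(G,Y,K2)`. -/
def SepLE (G : SimpleGraph V) (Y K1 K2 : Set V) : Prop :=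
  NR G Y K1 ⊆ NR G Y K2

/-- The strict order on `X`–`Y` separators. -/
def SepLT (G : SimpleGraph V) (Y K1 K2 : Set V) : Prop :=
  NR G Y K1 ⊆ NR G Y K2 ∧ NR G Y K1 ≠ NR G Y K2

/-- A minimal `X`–`Y` separator: no proper subset is an `X`–`Y` separator. -/
def IsMinimalSeparator (G : SimpleGraph V) (X Y K : Set V) : Prop :=
  IsSeparator G X Y K ∧ ∀ K' ⊂ K, ¬ IsSeparator G X Y K'

/-- An important `X`–`Y` separator: a minimal separator `K` such that there is
no separator `K'` with `K < K'` and `|K'| ≤ |K|`. -/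
def IsImportantSeparator (G : SimpleGraph V) (X Y K : Set V) : Prop :=
  IsMinimalSeparator G X Y K ∧
  ¬ ∃ K', IsSeparator G X Y K' ∧ SepLT G Y K K' ∧ K'.ncard ≤ K.ncard

/-- The minimum size of an `X`–`Y` separator of `G`. -/
noncomputable def minSepSize (G : SimpleGraph V) (X Y : Set V) : ℕ :=
  sInf {n | ∃ K, IsSeparator G X Y K ∧ K.ncard = n}

/-- The excess of a separator: its size minus the minimum separator size. -/
noncomputable def excess (G : SimpleGraph V) (X Y K : Set V) : ℕ :=
  K.ncard - minSepSize G X Y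

/-- The graph `Pr(G,X,Y,K)`: the vertices `NR(G,Y,K) \ X` are deleted (here:
made isolated), and every vertex of `X` is made adjacent to every vertex of `K`. -/
def PrGraph (G : SimpleGraph V) (X Y K : Set V) : SimpleGraph V where
  Adj u v := u ≠ v ∧ u ∉ NR G Y K \ X ∧ v ∉ NR G Y K \ X ∧
    (G.Adj u v ∨ (u ∈ X ∧ v ∈ K) ∨ (u ∈ K ∧ v ∈ X))
  symm := by
    constructor
    rintro u v ⟨h1, h2, h3, h4⟩
    refine ⟨h1.symm, h3, h2, ?_⟩
    rcases h4 with h | h | h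
    · exact Or.inl h.symm
    · exact Or.inr (Or.inr ⟨h.2, h.1⟩)
    · exact Or.inr (Or.inl ⟨h.2, h.1⟩)
  loopless := by constructor; rintro v ⟨h1, -⟩; exact h1 rfl

/-- `NSet G X` is `N(X)`: the set of vertices outside `X` adjacent to a vertex of `X`. -/
def NSet (G : SimpleGraph V) (X : Set V) : Set V :=
  {v | v ∉ X ∧ ∃ x ∈ X, G.Adj x v}

/-- `G` is `X`–`Y` normalized: `N(X)` is an `X`–`Y` separator and is
the unique smallest `X`–`Y` separator. -/
def Normalized (G : SimpleGraph V) (X Y : Set V) : Prop :=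
  IsSeparator G X Y (NSet G X) ∧
  ∀ K, IsSeparator G X Y K → K ≠ NSet G X → (NSet G X).ncard < K.ncard

/-- The cover excess `CE(S)`: the minimum excess of an `X`–`Y` separator disjoint from `S`. -/
noncomputable def CE (G : SimpleGraph V) (X Y S : Set V) : ℕ :=
  sInf {n | ∃ K, IsSeparator G X Y K ∧ Disjoint K S ∧ excess G X Y K = n}

/-- A witness of `S`: an `X`–`Y` separator disjoint from `S` whose excess equals `CE(S)`. -/
noncomputable def IsWitness (G : SimpleGraph V) (X Y S K : Set V) : Prop :=
  IsSeparator G X Y K ∧ Disjoint K S ∧ excess G X Y K = CE G X Y S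

/-- An important witness of `S`: a witness of `S` that is an important `X`–`Y` separator. -/
noncomputable def IsImportantWitness (G : SimpleGraph V) (X Y S K : Set V) : Prop :=
  IsWitness G X Y S K ∧ IsImportantSeparator G X Y K

-- ===================== auxiliary lemmas =====================

section Aux
variable {G : SimpleGraph V} {X Y K A B Z : Set V} {v u a b : V}

lemma reach_not_mem (h : v ∈ Reach G A B) : v ∉ B := by
  obtain ⟨a, ha, w, hw⟩ := h
  exact hw v w.end_mem_support

lemma reach_adj (h : v ∈ Reach G A B) (hadj : G.Adj v u) (hu : u ∉ B) :
    u ∈ Reach G A B := by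
  obtain ⟨a, ha, w, hw⟩ := h
  refine ⟨a, ha, w.concat hadj, ?_⟩
  intro x hx
  simp only [SimpleGraph.Walk.support_concat, List.concat_eq_append, List.mem_append,
    List.mem_singleton] at hx
  rcases hx with hx | rfl
  · exact hw x hx
  · exact hu

lemma mem_reach_self (ha : a ∈ A) (hB : a ∉ B) : a ∈ Reach G A B :=
  ⟨a, ha, SimpleGraph.Walk.nil, by simpa using hB⟩

lemma not_mem_NR_iff : v ∉ NR G A B ↔ v ∈ B ∨ v ∈ Reach G A B := by
  simp only [NR, Reach, Set.mem_setOf_eq, not_and, not_not]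
  constructor
  · intro h
    by_cases hv : v ∈ B
    · exact Or.inl hv
    · exact Or.inr (h hv)
  · rintro (h | h) hv
    · exact absurd h hv
    · exact h

lemma reach_not_mem_NR (h : v ∈ Reach G A B) : v ∉ NR G A B :=
  not_mem_NR_iff.2 (Or.inr h)

lemma mem_NR_not_mem (h : v ∈ NR G A B) : v ∉ B := h.1

/-- crossing lemma: a walk from outside `Z` into `Z` passes through `NSet G Z`. -/
lemma crossing (w : G.Walk a b) :
    a ∉ Z → b ∈ Z → ∃ u ∈ w.support, u ∈ NSet G Z := by
  induction w with
  | nil => intro ha hb; exact absurd hb ha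
  | @cons x c y h p ih =>
    intro ha hb
    by_cases hc : c ∈ Z
    · exact ⟨x, by simp, ha, c, hc, h.symm⟩
    · obtain ⟨u, hu, huN⟩ := ih hc hb
      exact ⟨u, by simp [hu], huN⟩

/-- a walk starting in `Z` avoiding `NSet G Z` stays in `Z`. -/
lemma stay (w : G.Walk a b) :
    a ∈ Z → (∀ u ∈ w.support, u ∉ NSet G Z) → ∀ u ∈ w.support, u ∈ Z := by
  induction w with
  | nil => intro ha h u hu; simp at hu; subst hu; exact ha
  | @cons x c y hadj p ih =>
    intro ha h
    have hc : c ∈ Z := by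
      by_contra hc
      exact h c (by simp) ⟨hc, x, ha, hadj⟩
    intro u hu
    rw [SimpleGraph.Walk.support_cons, List.mem_cons] at hu
    rcases hu with rfl | hu
    · exact ha
    · exact ih hc (fun z hz => h z (by simp [hz])) u hu

lemma sep_X_not_reach (hK : IsSeparator G X Y K) (hx : v ∈ X) :
    v ∉ Reach G Y K := by
  rintro ⟨y, hy, w, hw⟩
  obtain ⟨z, hz, hzK⟩ := hK.2 v hx y hy w.reverse
  rw [SimpleGraph.Walk.support_reverse, List.mem_reverse] at hz
  exact hw z hz hzK

lemma sep_Y_subset_reach (hK : IsSeparator G X Y K) : Y ⊆ Reach G Y K := by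
  intro y hy
  exact mem_reach_self hy (fun hyK => (hK.1 hyK) (Or.inr hy))

lemma sep_X_mem_NR (hK : IsSeparator G X Y K) (hx : v ∈ X) : v ∈ NR G Y K :=
  ⟨fun hvK => (hK.1 hvK) (Or.inl hx), fun h => sep_X_not_reach hK hx h⟩

lemma nset_reach_subset (hK : IsSeparator G X Y K) :
    NSet G (Reach G Y K) ⊆ K := by
  rintro v ⟨hvR, u, huR, hadj⟩
  by_contra hvK
  exact hvR (reach_adj huR hadj hvK)

/-- extraction: from a walk through `v ∈ K` otherwise avoiding `K`, get a
neighbor of `v` reachable from the start avoiding `K`. -/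
lemma extract {K : Set V} (p : G.Walk a b) :
    a ∉ K → v ∈ p.support → v ∈ K → (∀ z ∈ p.support, z ∉ K \ {v}) →
    ∃ u, G.Adj u v ∧ ∃ q : G.Walk a u, ∀ z ∈ q.support, z ∉ K := by
  induction p with
  | nil =>
    intro haK hv hvK _
    simp at hv; subst hv; exact absurd hvK haK
  | @cons x c y h p ih =>
    intro haK hv hvK hsupp
    by_cases hc : c = v
    · subst hc
      exact ⟨x, h, SimpleGraph.Walk.nil, by simpa using haK⟩
    · have hva : v ≠ x := fun h' => haK (h' ▸ hvK)
      have hv' : v ∈ p.support := by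
        rw [SimpleGraph.Walk.support_cons, List.mem_cons] at hv
        tauto
      have hcK : c ∉ K := by
        have := hsupp c (by simp)
        simp only [Set.mem_diff, Set.mem_singleton_iff] at this
        tauto
      obtain ⟨u, hadj, q, hq⟩ := ih hcK hv' hvK (fun z hz => hsupp z (by simp [hz]))
      refine ⟨u, hadj, SimpleGraph.Walk.cons h q, ?_⟩
      intro z hz
      rw [SimpleGraph.Walk.support_cons, List.mem_cons] at hz
      rcases hz with rfl | hz
      · exact haK
      · exact hq z hz

/-- every vertex of a minimal separator has a neighbor in `Reach G Y K` and
a neighbor in `NR G Y K`. -/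
lemma minimal_neighbors (hK : IsMinimalSeparator G X Y K) (hv : v ∈ K) :
    (∃ u, G.Adj v u ∧ u ∈ Reach G Y K) ∧ (∃ u, G.Adj v u ∧ u ∈ NR G Y K) := by
  have hsub : K \ {v} ⊂ K := Set.sdiff_singleton_ssubset.2 hv
  have hns := hK.2 _ hsub
  rw [IsSeparator] at hns
  push_neg at hns
  obtain ⟨x, hx, y, hy, w, hw⟩ :=
    hns (fun z hz => hK.1.1 hz.1)
  -- w : Walk x y, support avoids K \ {v}
  have hvw : v ∈ w.support := by
    obtain ⟨z, hz, hzK⟩ := hK.1.2 x hx y hy w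
    have hzv : z = v := by
      by_contra hne
      exact (hw z hz) ⟨hzK, hne⟩
    exact hzv ▸ hz
  have hxK : x ∉ K := fun h => (hK.1.1 h) (Or.inl hx)
  have hyK : y ∉ K := fun h => (hK.1.1 h) (Or.inr hy)
  constructor
  · -- neighbor in Reach : extract from the reversed walk (from y)
    have hvw' : v ∈ w.reverse.support := by
      rw [SimpleGraph.Walk.support_reverse, List.mem_reverse]; exact hvw
    obtain ⟨u, hadj, q, hq⟩ := extract w.reverse hyK hvw' hv
      (fun z hz => hw z (by rwa [SimpleGraph.Walk.support_reverse, List.mem_reverse] at hz))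
    exact ⟨u, hadj.symm, y, hy, q, hq⟩
  · -- neighbor in NR : extract from the walk (from x)
    obtain ⟨u, hadj, q, hq⟩ := extract w hxK hvw hv hw
    refine ⟨u, hadj.symm, ?_, ?_⟩
    · exact hq u q.end_mem_support
    · rintro ⟨y', hy', w', hw'⟩
      -- walk x → u avoiding K and walk y' → u avoiding K : contradiction
      obtain ⟨z, hz, hzK⟩ := hK.1.2 x hx y' hy' (q.append w'.reverse)
      rw [SimpleGraph.Walk.mem_support_append_iff] at hz
      rcases hz with hz | hz
      · exact hq z hz hzK
      · rw [SimpleGraph.Walk.support_reverse, List.mem_reverse] at hz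
        exact hw' z hz hzK

/-- minimal separators with equal `NR` sets are equal. -/
lemma eq_of_NR_eq (h1 : IsMinimalSeparator G X Y K) {K2 : Set V}
    (h2 : IsMinimalSeparator G X Y K2) (h : NR G Y K = NR G Y K2) : K = K2 := by
  have key : ∀ K1 K2 : Set V, IsMinimalSeparator G X Y K1 →
      IsMinimalSeparator G X Y K2 → NR G Y K1 = NR G Y K2 → K2 ⊆ K1 := by
    intro K1 K2 h1 h2 h v hv
    have hvNR2 : v ∉ NR G Y K2 := fun h' => h'.1 hv
    have hvNR1 : v ∉ NR G Y K1 := h ▸ hvNR2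
    rcases not_mem_NR_iff.1 hvNR1 with hvK1 | hvR1
    · exact hvK1
    · exfalso
      obtain ⟨_, u, hadj, huNR⟩ := minimal_neighbors h2 hv
      rw [← h] at huNR
      exact (reach_not_mem_NR (reach_adj hvR1 hadj huNR.1)) huNR
  exact Set.Subset.antisymm (key K2 K h2 h1 h.symm) (key K K2 h1 h2 h)

/-- `NSet G Z` is a separator provided `Y ⊆ Z`, `X ∩ Z = ∅`, and it avoids `X ∪ Y`. -/
lemma nset_separator (hY : Y ⊆ Z) (hX : ∀ x ∈ X, x ∉ Z)
    (hC : NSet G Z ⊆ (X ∪ Y)ᶜ) : IsSeparator G X Y (NSet G Z) := by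
  refine ⟨hC, fun x hx y hy w => ?_⟩
  exact crossing w (hX x hx) (hY hy)

lemma nset_submodular [Fintype V] (A B : Set V) :
    (NSet G (A ∪ B)).ncard + (NSet G (A ∩ B)).ncard ≤
      (NSet G A).ncard + (NSet G B).ncard := by
  classical
  have h1 : NSet G (A ∪ B) ∪ NSet G (A ∩ B) ⊆ NSet G A ∪ NSet G B := by
    rintro v (⟨hv, u, hu, hadj⟩ | ⟨hv, u, hu, hadj⟩)
    · rcases hu with hu | hu
      · exact Or.inl ⟨fun h => hv (Or.inl h), u, hu, hadj⟩
      · exact Or.inr ⟨fun h => hv (Or.inr h), u, hu, hadj⟩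
    · by_cases hvA : v ∈ A
      · exact Or.inr ⟨fun h => hv ⟨hvA, h⟩, u, hu.2, hadj⟩
      · exact Or.inl ⟨hvA, u, hu.1, hadj⟩
  have h2 : NSet G (A ∪ B) ∩ NSet G (A ∩ B) ⊆ NSet G A ∩ NSet G B := by
    rintro v ⟨⟨hv, -⟩, ⟨-, u, hu, hadj⟩⟩
    exact ⟨⟨fun h => hv (Or.inl h), u, hu.1, hadj⟩,
      ⟨fun h => hv (Or.inr h), u, hu.2, hadj⟩⟩
  calc (NSet G (A ∪ B)).ncard + (NSet G (A ∩ B)).ncard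
      = (NSet G (A ∪ B) ∪ NSet G (A ∩ B)).ncard +
        (NSet G (A ∪ B) ∩ NSet G (A ∩ B)).ncard := by
        rw [Set.ncard_union_add_ncard_inter]
    _ ≤ (NSet G A ∪ NSet G B).ncard + (NSet G A ∩ NSet G B).ncard :=
        Nat.add_le_add (Set.ncard_le_ncard h1) (Set.ncard_le_ncard h2)
    _ = (NSet G A).ncard + (NSet G B).ncard := by
        rw [Set.ncard_union_add_ncard_inter]

end Aux

section Main
variable {G : SimpleGraph V} {X Y : Set V}

lemma NR_subset_NR_nset_inter {K1 K2 : Set V}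
    (h1 : IsSeparator G X Y K1) (h2 : IsSeparator G X Y K2) :
    NR G Y K1 ⊆ NR G Y (NSet G (Reach G Y K1 ∩ Reach G Y K2)) := by
  intro v hv
  have hvK1 : v ∉ K1 := hv.1
  have hvR1 : v ∉ Reach G Y K1 := fun h => reach_not_mem_NR h hv
  constructor
  · rintro ⟨hvZ, u, hu, hadj⟩
    exact hvR1 (reach_adj hu.1 hadj hvK1)
  · rintro ⟨y, hy, w, hw⟩
    have := stay w (Set.mem_inter (sep_Y_subset_reach h1 hy) (sep_Y_subset_reach h2 hy)) hw v
      w.end_mem_support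
    exact hvR1 this.1

lemma important_size_unique [Fintype V] {K1 K2 : Set V}
    (h1 : IsImportantSeparator G X Y K1) (h2 : IsImportantSeparator G X Y K2)
    (s1 : K1.ncard = minSepSize G X Y) (s2 : K2.ncard = minSepSize G X Y) :
    K1 = K2 := by
  classical
  set r := minSepSize G X Y with hrdef
  by_cases hNR : NR G Y K1 = NR G Y K2
  · exact eq_of_NR_eq h1.1 h2.1 hNR
  exfalso
  set R1 := Reach G Y K1 with hR1
  set R2 := Reach G Y K2 with hR2
  have hKN : ∀ K : Set V, IsImportantSeparator G X Y K →
      K = NSet G (Reach G Y K) := by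
    intro K hK
    refine Set.Subset.antisymm ?_ (nset_reach_subset hK.1.1)
    intro v hv
    obtain ⟨⟨u, hadj, huR⟩, -⟩ := minimal_neighbors hK.1 hv
    exact ⟨fun h => reach_not_mem h hv, u, huR, hadj.symm⟩
  have e1 : (NSet G R1).ncard = r := by rw [← hKN K1 h1]; exact s1
  have e2 : (NSet G R2).ncard = r := by rw [← hKN K2 h2]; exact s2
  have hcompl : K1 ∪ K2 ⊆ (X ∪ Y)ᶜ := Set.union_subset h1.1.1.1 h2.1.1.1
  have hNIsub : NSet G (R1 ∩ R2) ⊆ K1 ∪ K2 := by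
    rintro v ⟨hv, u, hu, hadj⟩
    by_cases hvR1 : v ∈ R1
    · have hvR2 : v ∉ R2 := fun h => hv ⟨hvR1, h⟩
      right; by_contra hvK2; exact hvR2 (reach_adj hu.2 hadj hvK2)
    · left; by_contra hvK1; exact hvR1 (reach_adj hu.1 hadj hvK1)
  have hNUsub : NSet G (R1 ∪ R2) ⊆ K1 ∪ K2 := by
    rintro v ⟨hv, u, hu, hadj⟩
    rcases hu with hu | hu
    · left; by_contra hvK1; exact hv (Or.inl (reach_adj hu hadj hvK1))
    · right; by_contra hvK2; exact hv (Or.inr (reach_adj hu hadj hvK2))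
  have sepInter : IsSeparator G X Y (NSet G (R1 ∩ R2)) := by
    exact nset_separator (fun y hy => Set.mem_inter (sep_Y_subset_reach h1.1.1 hy)
      (sep_Y_subset_reach h2.1.1 hy)) (fun x hx h => sep_X_not_reach h1.1.1 hx h.1)
      (hNIsub.trans hcompl)
  have sepUnion : IsSeparator G X Y (NSet G (R1 ∪ R2)) := by
    refine nset_separator (fun y hy => Or.inl (sep_Y_subset_reach h1.1.1 hy))
      (fun x hx h => ?_) (hNUsub.trans hcompl)
    rcases h with h | h
    · exact sep_X_not_reach h1.1.1 hx h
    · exact sep_X_not_reach h2.1.1 hx h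
  have hr_le : ∀ K : Set V, IsSeparator G X Y K → r ≤ K.ncard :=
    fun K hK => Nat.sInf_le ⟨K, hK, rfl⟩
  have hsize : (NSet G (R1 ∩ R2)).ncard ≤ r := by
    have hsub := nset_submodular (G := G) R1 R2
    have hge := hr_le _ sepUnion
    omega
  set K' := NSet G (R1 ∩ R2) with hK'
  have sub1 : NR G Y K1 ⊆ NR G Y K' := NR_subset_NR_nset_inter h1.1.1 h2.1.1
  have sub2 : NR G Y K2 ⊆ NR G Y K' := by
    rw [hK', Set.inter_comm]
    exact NR_subset_NR_nset_inter h2.1.1 h1.1.1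
  have hone : NR G Y K1 ≠ NR G Y K' ∨ NR G Y K2 ≠ NR G Y K' := by
    by_contra h
    push_neg at h
    exact hNR (h.1.trans h.2.symm)
  rcases hone with h | h
  · exact h1.2 ⟨K', sepInter, ⟨sub1, h⟩, by rw [s1]; exact hsize⟩
  · exact h2.2 ⟨K', sepInter, ⟨sub2, h⟩, by rw [s2]; exact hsize⟩

end Main


/-- Suppose `G` has at least one `X`–`Y` separator and let `r`
be the minimum size of an `X`–`Y` separator of `G`.  Then there is exactly one
important `X`–`Y` separator of `G` of size `r`. -/
theorem existsUnique_smallest_important_separator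
    {V : Type*} [Fintype V] (G : SimpleGraph V) (X Y : Set V)
    (hXY : Disjoint X Y) (hex : ∃ K, IsSeparator G X Y K) :
    ∃! K : Set V, IsImportantSeparator G X Y K ∧ K.ncard = minSepSize G X Y := by
  classical
  set r := minSepSize G X Y with hrdef
  have hne : {n | ∃ K, IsSeparator G X Y K ∧ K.ncard = n}.Nonempty := by
    obtain ⟨K, hK⟩ := hex
    exact ⟨K.ncard, K, hK, rfl⟩
  obtain ⟨K0, hK0, hK0r⟩ := Nat.sInf_mem hne
  have hr_le : ∀ K : Set V, IsSeparator G X Y K → r ≤ K.ncard :=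
    fun K hK => Nat.sInf_le ⟨K, hK, rfl⟩
  set S : Set (Set V) := {K | IsSeparator G X Y K ∧ K.ncard = r} with hS
  have hSfin : S.Finite := Set.toFinite S
  have hSne : hSfin.toFinset.Nonempty :=
    ⟨K0, by rw [Set.Finite.mem_toFinset]; exact ⟨hK0, hK0r⟩⟩
  obtain ⟨K, hKmem, hKmax⟩ :=
    hSfin.toFinset.exists_max_image (fun K => (NR G Y K).ncard) hSne
  rw [Set.Finite.mem_toFinset] at hKmem
  obtain ⟨hKsep, hKr⟩ := hKmem
  have hmin : IsMinimalSeparator G X Y K := by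
    refine ⟨hKsep, fun K' hK' hsep => ?_⟩
    have hlt : K'.ncard < K.ncard := Set.ncard_lt_ncard hK' (Set.toFinite K)
    have := hr_le K' hsep
    omega
  have himp : IsImportantSeparator G X Y K := by
    refine ⟨hmin, ?_⟩
    rintro ⟨K', hsep', ⟨hle, hne'⟩, hcard⟩
    have hK'r : K'.ncard = r := le_antisymm (hcard.trans_eq hKr) (hr_le _ hsep')
    have hmem' : K' ∈ hSfin.toFinset := by
      rw [Set.Finite.mem_toFinset]; exact ⟨hsep', hK'r⟩
    have hmax := hKmax K' hmem'
    have hlt : (NR G Y K).ncard < (NR G Y K').ncard :=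
      Set.ncard_lt_ncard (HasSubset.Subset.ssubset_of_ne hle hne') (Set.toFinite _)
    omega
  refine ⟨K, ⟨himp, hKr⟩, ?_⟩
  rintro K2 ⟨himp2, hK2r⟩
  exact important_size_unique himp2 himp hK2r hKr
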